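/- arXiv:1805.12335 — 3 statements merged into one kernel-verified Lean document; each statement's English description precedes it below -/
import Mathlib

section
/- For every γ ∈ GL_r(F_∞) there exists a constant c₁ > 0 such that for every ω ∈ Ω^r: h(ω) ≤ c₁·|j(γ,ω)|·|ω|^{−1} ≤ 1. (One may take c₁ = |x|^{−1}|ξ| where x is an entry of maximal absolute value in the last row of γ.) -/
noncomputable section

namespace Paper

/-- The sup-norm `|ω| = max_i |ω_i|` of a vector. -/
noncomputable def supNorm {K : Type*} [NormedField K] {m : ℕ} (ω : Fin m → K) : ℝ :=
  ⨆ i, ‖ω i‖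

/-- A linear form with coefficients `ℓ i` in `F_∞` is unimodular if its largest
coefficient has absolute value `1`. -/
def Unimodular {K : Type*} [NormedField K] (Finf : Subfield K) {m : ℕ} (ℓ : Fin m → K) : Prop :=
  (∀ i, ℓ i ∈ Finf) ∧ supNorm ℓ = 1

/-- `h(ω) = |ω|⁻¹ · inf {|ℓ(ω)| : ℓ a unimodular F_∞-linear form}`. -/
noncomputable def hOm {K : Type*} [NormedField K] (Finf : Subfield K) {m : ℕ}
    (ω : Fin m → K) : ℝ :=
  (supNorm ω)⁻¹ *
    sInf {x : ℝ | ∃ ℓ : Fin m → K, Unimodular Finf ℓ ∧ x = ‖∑ i, ℓ i * ω i‖}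

/-- The Drinfeld period domain `Ω^{m+1}`: vectors with `F_∞`-linearly independent entries
and last entry `ξ`. -/
def Omega {K : Type*} [NormedField K] (Finf : Subfield K) (ξ : K) (m : ℕ) :
    Set (Fin (m + 1) → K) :=
  {ω | (∀ c : Fin (m + 1) → K, (∀ i, c i ∈ Finf) → ∑ i, c i * ω i = 0 → ∀ i, c i = 0) ∧
    ω (Fin.last m) = ξ}

/-- `Ω^{m+1}_n = {ω ∈ Ω^{m+1} : h(ω) ≥ |π|^n}` where `|π| = q⁻¹`. -/
def OmegaN {K : Type*} [NormedField K] (Finf : Subfield K) (ξ : K) (q : ℕ) (m n : ℕ) :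
    Set (Fin (m + 1) → K) :=
  {ω | ω ∈ Omega Finf ξ m ∧ ((q : ℝ))⁻¹ ^ n ≤ hOm Finf ω}

/-- The automorphy factor `j(γ,ω) = ξ⁻¹·(last entry of γω)`. -/
noncomputable def jmap {K : Type*} [NormedField K] (ξ : K) {m : ℕ}
    (γ : Matrix (Fin (m + 1)) (Fin (m + 1)) K) (ω : Fin (m + 1) → K) : K :=
  ξ⁻¹ * (γ.mulVec ω) (Fin.last m)

/-- The action `γ(ω) = j(γ,ω)⁻¹·γω` of `GL_{m+1}(F_∞)` on `Ω^{m+1}`. -/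
noncomputable def gact {K : Type*} [NormedField K] (ξ : K) {m : ℕ}
    (γ : Matrix (Fin (m + 1)) (Fin (m + 1)) K) (ω : Fin (m + 1) → K) : Fin (m + 1) → K :=
  fun i => (jmap ξ γ ω)⁻¹ * (γ.mulVec ω) i

/-- For every `γ ∈ GL_r(F_∞)` (entries in `F_∞`, invertible) there exists
`c₁ > 0` such that for every `ω ∈ Ω^r`:  `h(ω) ≤ c₁·|j(γ,ω)|·|ω|⁻¹ ≤ 1`. -/
theorem statement5
    (p k q : ℕ) (hp : p.Prime) (hqpk : q = p ^ k) (hk : 0 < k)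
    {K : Type*} [NormedField K] [CompleteSpace K] [IsAlgClosed K] [IsUltrametricDist K]
    [CharP K p]
    (t : K) (ht : ‖t‖ = (q : ℝ))
    (Fq : Subfield K) (hFq : (Fq : Set K) = {x : K | x ^ q = x})
    (F : Subfield K) (hF : F = Subfield.closure ((Fq : Set K) ∪ {t}))
    (A : Subring K) (hA : A = Subring.closure ((Fq : Set K) ∪ {t}))
    (Finf : Subfield K) (hFinf : (Finf : Set K) = closure (F : Set K))
    (ξ : K) (hξ : ξ ≠ 0)
    (m : ℕ) (γ : Matrix (Fin (m + 1)) (Fin (m + 1)) K)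
    (hγF : ∀ i j, γ i j ∈ Finf) (hγdet : γ.det ≠ 0) :
    ∃ c₁ : ℝ, 0 < c₁ ∧ ∀ ω ∈ Omega Finf ξ m,
      hOm Finf ω ≤ c₁ * ‖jmap ξ γ ω‖ * (supNorm ω)⁻¹ ∧
      c₁ * ‖jmap ξ γ ω‖ * (supNorm ω)⁻¹ ≤ 1 := by
  classical
  obtain ⟨i₀, hi₀⟩ := Finite.exists_max (fun i => ‖γ (Fin.last m) i‖)
  set x := γ (Fin.last m) i₀ with hx
  have hxne : x ≠ 0 := by
    intro h0
    apply hγdet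
    apply Matrix.det_eq_zero_of_row_eq_zero (Fin.last m)
    intro j
    have h := hi₀ j
    rw [h0, norm_zero] at h
    exact norm_le_zero_iff.mp h
  have hxpos : 0 < ‖x‖ := norm_pos_iff.mpr hxne
  refine ⟨‖x‖⁻¹ * ‖ξ‖, mul_pos (inv_pos.mpr hxpos) (norm_pos_iff.mpr hξ), ?_⟩
  intro ω hω
  obtain ⟨hlin, hlast⟩ := hω
  have hbdd : ∀ f : Fin (m+1) → K, BddAbove (Set.range fun i => ‖f i‖) :=
    fun f => (Set.finite_range _).bddAbove
  have hle : ∀ (f : Fin (m+1) → K) i, ‖f i‖ ≤ supNorm f :=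
    fun f i => le_ciSup (hbdd f) i
  have hωpos : 0 < supNorm ω := by
    refine lt_of_lt_of_le (norm_pos_iff.mpr hξ) ?_
    have h := hle ω (Fin.last m)
    rwa [hlast] at h
  set ℓ : Fin (m+1) → K := fun i => x⁻¹ * γ (Fin.last m) i with hℓ
  have hℓle : ∀ i, ‖ℓ i‖ ≤ 1 := by
    intro i
    rw [hℓ]
    simp only [norm_mul, norm_inv]
    rw [inv_mul_le_iff₀ hxpos, mul_one]
    exact hi₀ i
  have hℓuni : Unimodular Finf ℓ := by
    constructor
    · intro i; exact Finf.mul_mem (Finf.inv_mem (hγF _ _)) (hγF _ _)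
    · refine le_antisymm (ciSup_le hℓle) ?_
      have h1 : ‖ℓ i₀‖ = 1 := by
        rw [hℓ]
        simp only [← hx, norm_mul, norm_inv]
        exact inv_mul_cancel₀ (ne_of_gt hxpos)
      calc (1:ℝ) = ‖ℓ i₀‖ := h1.symm
        _ ≤ _ := hle ℓ i₀
  have hmv : (γ.mulVec ω) (Fin.last m) = ∑ i, γ (Fin.last m) i * ω i := by
    simp [Matrix.mulVec, dotProduct]
  have hsum : ∑ i, ℓ i * ω i = x⁻¹ * ξ * jmap ξ γ ω := by
    rw [jmap, hmv]
    rw [mul_assoc, mul_inv_cancel_left₀ hξ, Finset.mul_sum]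
    exact Finset.sum_congr rfl fun i _ => (mul_assoc _ _ _)
  have hnorm : ‖∑ i, ℓ i * ω i‖ = ‖x‖⁻¹ * ‖ξ‖ * ‖jmap ξ γ ω‖ := by
    rw [hsum, norm_mul, norm_mul, norm_inv]
  -- sup norm bound on the linear form value
  have hub : ‖∑ i, ℓ i * ω i‖ ≤ supNorm ω := by
    apply IsUltrametricDist.norm_sum_le_of_forall_le_of_nonneg (le_of_lt hωpos)
    intro i _
    rw [norm_mul]
    calc ‖ℓ i‖ * ‖ω i‖ ≤ 1 * supNorm ω :=
          mul_le_mul (hℓle i) (hle ω i) (norm_nonneg _) zero_le_one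
      _ = supNorm ω := one_mul _
  set S : Set ℝ := {y : ℝ | ∃ ℓ' : Fin (m+1) → K, Unimodular Finf ℓ' ∧ y = ‖∑ i, ℓ' i * ω i‖}
    with hS
  have hmem : ‖x‖⁻¹ * ‖ξ‖ * ‖jmap ξ γ ω‖ ∈ S := ⟨ℓ, hℓuni, hnorm.symm⟩
  have hSbdd : BddBelow S := ⟨0, fun y ⟨ℓ', _, hy⟩ => hy ▸ norm_nonneg _⟩
  have hInf : sInf S ≤ ‖x‖⁻¹ * ‖ξ‖ * ‖jmap ξ γ ω‖ := csInf_le hSbdd hmem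
  constructor
  · rw [hOm, ← hS]
    rw [mul_comm (‖x‖⁻¹ * ‖ξ‖ * ‖jmap ξ γ ω‖) (supNorm ω)⁻¹]
    exact mul_le_mul_of_nonneg_left hInf (by positivity)
  · rw [← hnorm, ← div_eq_mul_inv, div_le_one hωpos]
    exact hub

end Paper
end
end

section
/- For every γ ∈ GL_r(F_∞) there exists a constant c₂ > 0 such that for every ω ∈ Ω^r: |γ(ω)| ≤ c₂·h(ω)^{−1}. -/
noncomputable section

namespace Paper
set_option synthInstance.maxHeartbeats 1000000
set_option maxHeartbeats 1000000

section Aux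
set_option linter.unusedSectionVars false
variable {K : Type*} [NormedField K]

lemma supNorm_eq_sup' {m : ℕ} (ω : Fin (m+1) → K) :
    supNorm ω = Finset.univ.sup' (Finset.univ_nonempty) (fun i => ‖ω i‖) :=
  (Finset.sup'_univ_eq_ciSup _).symm

lemma le_supNorm {m : ℕ} (ω : Fin (m+1) → K) (i : Fin (m+1)) : ‖ω i‖ ≤ supNorm ω := by
  rw [supNorm_eq_sup']; exact Finset.le_sup' (fun i => ‖ω i‖) (Finset.mem_univ i)

lemma supNorm_nonneg {m : ℕ} (ω : Fin (m+1) → K) : 0 ≤ supNorm ω :=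
  le_trans (norm_nonneg _) (le_supNorm ω 0)

lemma supNorm_le {m : ℕ} {ω : Fin (m+1) → K} {b : ℝ} (h : ∀ i, ‖ω i‖ ≤ b) : supNorm ω ≤ b := by
  rw [supNorm_eq_sup']; exact Finset.sup'_le _ _ fun i _ => h i

lemma exists_supNorm_eq {m : ℕ} (ω : Fin (m+1) → K) : ∃ i, supNorm ω = ‖ω i‖ := by
  rw [supNorm_eq_sup']
  obtain ⟨i, _, h⟩ := Finset.exists_mem_eq_sup' (Finset.univ_nonempty) (fun i => ‖ω i‖)
  exact ⟨i, h⟩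

lemma supNorm_smul {m : ℕ} (a : K) (ω : Fin (m+1) → K) :
    supNorm (fun i => a * ω i) = ‖a‖ * supNorm ω := by
  obtain ⟨i, hi⟩ := exists_supNorm_eq ω
  refine le_antisymm (supNorm_le fun j => ?_) ?_
  · rw [norm_mul]
    exact mul_le_mul_of_nonneg_left (le_supNorm ω j) (norm_nonneg a)
  · rw [hi, ← norm_mul]
    exact le_supNorm (fun i => a * ω i) i

lemma supNorm_eq_pinorm {m : ℕ} (ω : Fin (m+1) → K) : supNorm ω = ‖ω‖ := by
  refine le_antisymm (supNorm_le fun i => norm_le_pi_norm ω i) ?_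
  exact (pi_norm_le_iff_of_nonneg (supNorm_nonneg ω)).2 fun i => le_supNorm ω i


open IsUltrametricDist Polynomial

variable {K : Type*} [NormedField K] [IsUltrametricDist K]

lemma real_pow_eq_self {r : ℝ} (h0 : 0 < r) {q : ℕ} (hq : 2 ≤ q) (h : r ^ q = r) : r = 1 := by
  rcases lt_trichotomy r 1 with hr | hr | hr
  · have := pow_lt_pow_right_of_lt_one₀ h0 hr (by omega : 1 < q)
    rw [h, pow_one] at this; exact absurd this (lt_irrefl r)
  · exact hr
  · have := pow_lt_pow_right₀ hr (by omega : 1 < q)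
    rw [h, pow_one] at this; exact absurd this (lt_irrefl r)

lemma norm_fq_le_one {q : ℕ} (hq : 2 ≤ q) {x : K} (hx : x ^ q = x) : ‖x‖ ≤ 1 := by
  by_cases h0 : x = 0
  · simp [h0]
  · have : ‖x‖ ^ q = ‖x‖ := by rw [← norm_pow, hx]
    exact le_of_eq (real_pow_eq_self (norm_pos_iff.mpr h0) hq this)

lemma norm_fq_eq_one {q : ℕ} (hq : 2 ≤ q) {x : K} (hx : x ^ q = x) (h0 : x ≠ 0) : ‖x‖ = 1 := by
  have : ‖x‖ ^ q = ‖x‖ := by rw [← norm_pow, hx]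
  exact real_pow_eq_self (norm_pos_iff.mpr h0) hq this

lemma fq_finite {q : ℕ} (hq : 2 ≤ q) : Set.Finite {x : K | x ^ q = x} := by
  have hp : ((X : K[X]) ^ q - X) ≠ 0 := by
    intro h
    have h2 : ((X : K[X]) ^ q - X).coeff q = 0 := by rw [h]; simp
    rw [Polynomial.coeff_sub, Polynomial.coeff_X_pow, Polynomial.coeff_X, if_pos rfl,
      if_neg (by omega : ¬(1 = q))] at h2
    norm_num at h2
  refine (Polynomial.finite_setOf_isRoot hp).subset ?_
  intro x hx
  simp only [Set.mem_setOf_eq, Polynomial.IsRoot, Polynomial.eval_sub, Polynomial.eval_pow,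
    Polynomial.eval_X]
  rw [hx]; ring

lemma norm_phi {q : ℕ} (hq : 2 ≤ q) {t : K} (ht : ‖t‖ = (q : ℝ)) {Fq : Subfield K}
    (hFq : ∀ x : Fq, (x : K) ^ q = (x : K)) {f : Polynomial Fq} (hf : f ≠ 0) :
    ‖Polynomial.eval₂ (Subfield.subtype Fq) t f‖ = (q : ℝ) ^ f.natDegree := by
  have hq1 : (1 : ℝ) < (q : ℝ) := by exact_mod_cast (by omega : 1 < q)
  have hq0 : (0 : ℝ) < (q : ℝ) := by linarith
  set n := f.natDegree with hn
  rw [Polynomial.eval₂_eq_sum_range, Finset.sum_range_succ]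
  have hlead : ‖Subfield.subtype Fq (f.coeff n) * t ^ n‖ = (q : ℝ) ^ n := by
    rw [norm_mul, norm_pow, ht]
    have hc : f.coeff n ≠ 0 := by
      simpa [hn] using Polynomial.leadingCoeff_ne_zero.mpr hf
    have : (Subfield.subtype Fq (f.coeff n)) ≠ 0 := by
      simpa using fun h => hc (Subtype.ext h)
    rw [show ‖Fq.subtype (f.coeff n)‖ = 1 from norm_fq_eq_one hq (hFq _) this, one_mul]
  have hS : ‖∑ i ∈ Finset.range n, Subfield.subtype Fq (f.coeff i) * t ^ i‖
      ≤ (q : ℝ) ^ n * (q : ℝ)⁻¹ := by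
    refine norm_sum_le_of_forall_le_of_nonneg ?_ fun i hi => ?_
    · positivity
    · rw [Finset.mem_range] at hi
      rw [norm_mul, norm_pow, ht]
      calc ‖Subfield.subtype Fq (f.coeff i)‖ * (q:ℝ) ^ i ≤ 1 * (q:ℝ) ^ i := by
            refine mul_le_mul_of_nonneg_right ?_ (by positivity)
            exact norm_fq_le_one hq (hFq _)
        _ = (q:ℝ) ^ i := one_mul _
        _ ≤ (q:ℝ) ^ n * (q:ℝ)⁻¹ := by
            rw [← div_eq_mul_inv, le_div_iff₀ hq0, ← pow_succ]
            exact pow_le_pow_right₀ (le_of_lt hq1) (by omega)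
  have hlt : ‖∑ i ∈ Finset.range n, Subfield.subtype Fq (f.coeff i) * t ^ i‖
      < ‖Subfield.subtype Fq (f.coeff n) * t ^ n‖ := by
    rw [hlead]
    refine lt_of_le_of_lt hS ?_
    exact mul_lt_of_lt_one_right (by positivity) (inv_lt_one_of_one_lt₀ hq1)
  rw [norm_add_eq_max_of_norm_ne_norm (ne_of_lt hlt), max_eq_right (le_of_lt hlt), hlead]


open IsUltrametricDist Polynomial

variable {K : Type*} [NormedField K] [IsUltrametricDist K]

lemma mem_ratio {t : K} (Fq : Subfield K) {x : K}
    (hx : x ∈ Subfield.closure ((Fq : Set K) ∪ {t})) :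
    ∃ f g : Polynomial Fq, g ≠ 0 ∧
      Polynomial.eval₂ (Subfield.subtype Fq) t f / Polynomial.eval₂ (Subfield.subtype Fq) t g
        = x := by
  have hle : Subring.closure ((Fq : Set K) ∪ {t})
      ≤ (Polynomial.eval₂RingHom (Subfield.subtype Fq) t).range := by
    rw [Subring.closure_le]
    rintro x (hx | hx)
    · exact ⟨Polynomial.C ⟨x, hx⟩, by simp⟩
    · rw [Set.mem_singleton_iff] at hx
      subst hx
      exact ⟨Polynomial.X, by simp⟩
  rw [Subfield.mem_closure_iff] at hx
  obtain ⟨y, hy, z, hz, hxyz⟩ := hx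
  obtain ⟨f, hf⟩ := hle hy
  obtain ⟨g, hg⟩ := hle hz
  simp only [Polynomial.coe_eval₂RingHom] at hf hg
  by_cases hz0 : z = 0
  · refine ⟨0, 1, one_ne_zero, ?_⟩
    rw [← hxyz, hz0, div_zero]
    simp
  · refine ⟨f, g, ?_, by rw [hf, hg, hxyz]⟩
    intro h0
    rw [h0] at hg
    simp at hg
    exact hz0 hg.symm


lemma approx {q : ℕ} (hq : 2 ≤ q) {t : K} (ht : ‖t‖ = (q : ℝ)) {Fq : Subfield K}
    (hFq : ∀ x : Fq, (x : K) ^ q = (x : K)) :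
    ∀ n : ℕ, ∀ f g : Polynomial Fq, g ≠ 0 →
      ‖Polynomial.eval₂ (Subfield.subtype Fq) t f /
        Polynomial.eval₂ (Subfield.subtype Fq) t g‖ ≤ 1 →
      ∃ a : Fin n → K, (∀ i, a i ∈ Fq) ∧
        ‖Polynomial.eval₂ (Subfield.subtype Fq) t f /
          Polynomial.eval₂ (Subfield.subtype Fq) t g
          - ∑ i, a i * t⁻¹ ^ (i : ℕ)‖ ≤ ((q : ℝ)⁻¹) ^ n := by
  have hq1 : (1 : ℝ) < (q : ℝ) := by exact_mod_cast (by omega : 1 < q)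
  have hq0 : (0 : ℝ) < (q : ℝ) := by linarith
  have ht0 : t ≠ 0 := by
    intro h; rw [h, norm_zero] at ht; linarith
  intro n
  induction n with
  | zero =>
    intro f g hg hz
    exact ⟨0, fun i => Fq.zero_mem, by simpa using hz⟩
  | succ n IH =>
    intro f g hg hz
    set ev : Polynomial Fq → K := Polynomial.eval₂ (Subfield.subtype Fq) t with hev
    by_cases hf : f = 0
    · refine ⟨0, fun i => Fq.zero_mem, ?_⟩
      have h00 : ev (0 : Polynomial Fq) = 0 := by rw [hev]; simp
      simp only [hf, h00, zero_div, Pi.zero_apply, zero_mul, Finset.sum_const_zero, sub_zero,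
        norm_zero]
      positivity
    have hgn : ‖ev g‖ = (q : ℝ) ^ g.natDegree := norm_phi hq ht hFq hg
    have hg0 : ev g ≠ 0 := by
      intro h; rw [h, norm_zero] at hgn
      exact absurd hgn.symm (ne_of_gt (pow_pos hq0 _))
    have hfn : ‖ev f‖ = (q : ℝ) ^ f.natDegree := norm_phi hq ht hFq hf
    have hdeg : f.natDegree ≤ g.natDegree := by
      by_contra hlt
      push_neg at hlt
      have h2 : ‖ev f / ev g‖ = (q:ℝ) ^ f.natDegree / (q:ℝ) ^ g.natDegree := by
        rw [norm_div, hfn, hgn]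
      rw [h2, div_le_one (pow_pos hq0 _)] at hz
      exact absurd hz (not_le.mpr (pow_lt_pow_right₀ hq1 hlt))
    have hlc : g.leadingCoeff ≠ 0 := Polynomial.leadingCoeff_ne_zero.mpr hg
    set b : Fq := f.coeff g.natDegree * (g.leadingCoeff)⁻¹ with hb
    set f₁ : Polynomial Fq := f - Polynomial.C b * g with hf₁
    have hcoeff : f₁.coeff g.natDegree = 0 := by
      rw [hf₁, Polynomial.coeff_sub, Polynomial.coeff_C_mul, hb,
        Polynomial.coeff_natDegree]
      field_simp
      simp
    have hf₁lt : ∀ _ : f₁ ≠ 0, f₁.natDegree < g.natDegree := by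
      intro h1
      have hle2 : f₁.natDegree ≤ g.natDegree :=
        le_trans (Polynomial.natDegree_sub_le _ _)
          (max_le hdeg (le_trans (Polynomial.natDegree_C_mul_le _ _) le_rfl))
      rcases lt_or_eq_of_le hle2 with h | h
      · exact h
      · exfalso
        have hc2 := hcoeff
        rw [← h, Polynomial.coeff_natDegree] at hc2
        exact Polynomial.leadingCoeff_ne_zero.mpr h1 hc2
    have hevf₁ : ev f₁ = ev f - (b : K) * ev g := by
      rw [hf₁, hev]
      simp [Polynomial.eval₂_sub, Polynomial.eval₂_mul, Polynomial.eval₂_C]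
    have hz1 : ev f / ev g - (b : K) = ev f₁ / ev g := by
      rw [hevf₁, sub_div, mul_div_assoc, div_self hg0, mul_one]
    have hnorm1 : ‖ev f₁ / ev g‖ ≤ (q : ℝ)⁻¹ := by
      by_cases h1 : f₁ = 0
      · rw [h1, show ev (0 : Polynomial Fq) = 0 from by rw [hev]; simp, zero_div, norm_zero]
        positivity
      · rw [norm_div, norm_phi hq ht hFq h1, hgn, div_le_iff₀ (pow_pos hq0 _),
          ← div_eq_inv_mul, le_div_iff₀ hq0, ← pow_succ]
        exact pow_le_pow_right₀ hq1.le (hf₁lt h1)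
    have hXf₁ : ev (Polynomial.X * f₁) = t * ev f₁ := by
      rw [hev]; simp [Polynomial.eval₂_mul]
    have hz2 : ‖ev (Polynomial.X * f₁) / ev g‖ ≤ 1 := by
      rw [hXf₁, mul_div_assoc, norm_mul, ht]
      calc (q:ℝ) * ‖ev f₁ / ev g‖ ≤ (q:ℝ) * (q:ℝ)⁻¹ :=
            mul_le_mul_of_nonneg_left hnorm1 hq0.le
        _ = 1 := mul_inv_cancel₀ hq0.ne'
    obtain ⟨a', ha'mem, ha'⟩ := IH (Polynomial.X * f₁) g hg hz2
    refine ⟨Fin.cons (b : K) a', ?_, ?_⟩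
    · intro i
      refine Fin.cases ?_ ?_ i
      · simpa using b.2
      · intro j; simpa using ha'mem j
    · have hsum : ∑ i : Fin (n+1), (Fin.cons (b : K) a' : Fin (n+1) → K) i * t⁻¹ ^ (i : ℕ)
          = (b : K) + t⁻¹ * ∑ i : Fin n, a' i * t⁻¹ ^ (i : ℕ) := by
        rw [Fin.sum_univ_succ]
        simp only [Fin.cons_zero, Fin.cons_succ, Fin.val_zero, pow_zero, mul_one, Fin.val_succ,
          Finset.mul_sum]
        congr 1
        exact Finset.sum_congr rfl fun i _ => by rw [pow_succ]; ring
      rw [hsum]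
      have key : ev f / ev g - ((b : K) + t⁻¹ * ∑ i : Fin n, a' i * t⁻¹ ^ (i : ℕ))
          = t⁻¹ * (ev (Polynomial.X * f₁) / ev g - ∑ i : Fin n, a' i * t⁻¹ ^ (i : ℕ)) := by
        rw [hXf₁, mul_div_assoc, mul_sub, ← mul_assoc, inv_mul_cancel₀ ht0, one_mul, ← hz1]
        ring
      rw [key, norm_mul, norm_inv, ht, pow_succ, mul_comm ((q:ℝ)⁻¹) _]
      exact mul_le_mul_of_nonneg_right ha' (by positivity)


lemma ball_compact [CompleteSpace K] {q : ℕ} (hq : 2 ≤ q) {t : K} (ht : ‖t‖ = (q : ℝ))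
    {Fq : Subfield K} (hFqset : (Fq : Set K) = {x : K | x ^ q = x})
    {F : Subfield K} (hF : F = Subfield.closure ((Fq : Set K) ∪ {t}))
    {Finf : Subfield K} (hFinf : (Finf : Set K) = closure (F : Set K)) :
    IsCompact {x : K | x ∈ Finf ∧ ‖x‖ ≤ 1} := by
  have hq1 : (1 : ℝ) < (q : ℝ) := by exact_mod_cast (by omega : 1 < q)
  have hFq' : ∀ x : Fq, (x : K) ^ q = (x : K) := by
    intro x
    have := x.2
    rw [← SetLike.mem_coe, hFqset] at this
    exact this
  rw [isCompact_iff_totallyBounded_isComplete]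
  constructor
  · rw [Metric.totallyBounded_iff]
    intro ε hε
    obtain ⟨n, hn⟩ := exists_pow_lt_of_lt_one hε (show (q:ℝ)⁻¹ < 1 from inv_lt_one_of_one_lt₀ hq1)
    refine ⟨(fun a : Fin n → K => ∑ i, a i * t⁻¹ ^ (i : ℕ)) ''
      (Set.pi Set.univ fun _ => (Fq : Set K)), ?_, ?_⟩
    · refine Set.Finite.image _ (Set.Finite.pi fun _ => ?_)
      rw [hFqset]; exact fq_finite hq
    · rintro x ⟨hxF, hx1⟩
      have hxc : x ∈ closure (F : Set K) := by rw [← hFinf]; exact hxF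
      obtain ⟨z, hzF, hdz⟩ := Metric.mem_closure_iff.mp hxc (min ε 1) (lt_min hε one_pos)
      rw [dist_eq_norm] at hdz
      have hz1 : ‖z‖ ≤ 1 := by
        have h1 : z = x - (x - z) := by ring
        calc ‖z‖ = ‖x - (x - z)‖ := by rw [← h1]
          _ = ‖x + -(x - z)‖ := by rw [sub_eq_add_neg]
          _ ≤ max ‖x‖ ‖-(x - z)‖ := norm_add_le_max _ _
          _ = max ‖x‖ ‖x - z‖ := by rw [norm_neg]
          _ ≤ 1 := max_le hx1 (le_of_lt (lt_of_lt_of_le hdz (min_le_right _ _)))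
      have hzF' : z ∈ Subfield.closure ((Fq : Set K) ∪ {t}) := by
        have h3 : (F : Set K) = (Subfield.closure ((Fq : Set K) ∪ {t}) : Set K) := by rw [hF]
        rw [h3] at hzF
        exact hzF
      obtain ⟨f, g, hg, hfg⟩ := mem_ratio Fq hzF'
      obtain ⟨a, hamem, ha⟩ := approx hq ht hFq' n f g hg (by rw [hfg]; exact hz1)
      rw [hfg] at ha
      refine Set.mem_iUnion₂.mpr ⟨∑ i, a i * t⁻¹ ^ (i : ℕ), ?_, ?_⟩
      · exact Set.mem_image_of_mem _ (fun i _ => hamem i)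
      · rw [Metric.mem_ball, dist_eq_norm]
        have h2 : x - ∑ i, a i * t⁻¹ ^ (i : ℕ) = (x - z) + (z - ∑ i, a i * t⁻¹ ^ (i : ℕ)) := by
          ring
        calc ‖x - ∑ i, a i * t⁻¹ ^ (i : ℕ)‖
            ≤ max ‖x - z‖ ‖z - ∑ i, a i * t⁻¹ ^ (i : ℕ)‖ := by
              rw [h2]; exact norm_add_le_max _ _
          _ < ε := max_lt (lt_of_lt_of_le hdz (min_le_left _ _)) (lt_of_le_of_lt ha hn)
  · refine IsClosed.isComplete ?_
    have heq : {x : K | x ∈ Finf ∧ ‖x‖ ≤ 1} = (Finf : Set K) ∩ {x : K | ‖x‖ ≤ 1} := rfl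
    rw [heq, hFinf]
    exact isClosed_closure.inter (isClosed_le continuous_norm continuous_const)

end Aux

section Aux2
set_option linter.unusedSectionVars false
open IsUltrametricDist

variable {K : Type*} [NormedField K] [IsUltrametricDist K]

lemma sInf_pos' {m : ℕ} {Finf : Subfield K}
    (hcompact : IsCompact {x : K | x ∈ Finf ∧ ‖x‖ ≤ 1})
    (hclosed : IsClosed (Finf : Set K))
    {ω : Fin (m+1) → K}
    (hind : ∀ c : Fin (m+1) → K, (∀ i, c i ∈ Finf) → ∑ i, c i * ω i = 0 → ∀ i, c i = 0) :
    0 < sInf {x : ℝ | ∃ ℓ : Fin (m+1) → K, Unimodular Finf ℓ ∧ x = ‖∑ i, ℓ i * ω i‖} := by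
  set S : Set (Fin (m+1) → K) := {ℓ | Unimodular Finf ℓ} with hS
  have hSsub : S ⊆ Set.pi Set.univ (fun _ => {x : K | x ∈ Finf ∧ ‖x‖ ≤ 1}) := by
    rintro ℓ ⟨hmem, hsup⟩ i _
    exact ⟨hmem i, hsup ▸ le_supNorm ℓ i⟩
  have hSclosed : IsClosed S := by
    have heq : S = (⋂ i, (fun ℓ : Fin (m+1) → K => ℓ i) ⁻¹' (Finf : Set K))
        ∩ ((fun ℓ : Fin (m+1) → K => supNorm ℓ) ⁻¹' {1}) := by
      ext ℓ
      simp only [hS, Set.mem_setOf_eq, Unimodular, Set.mem_inter_iff, Set.mem_iInter,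
        Set.mem_preimage, Set.mem_singleton_iff, SetLike.mem_coe]
    rw [heq]
    refine IsClosed.inter (isClosed_iInter fun i => ?_) ?_
    · exact IsClosed.preimage (continuous_apply i) hclosed
    · have hcont : Continuous (fun ℓ : Fin (m+1) → K => supNorm ℓ) := by
        have : (fun ℓ : Fin (m+1) → K => supNorm ℓ) = fun ℓ => ‖ℓ‖ := by
          funext ℓ; exact supNorm_eq_pinorm ℓ
        rw [this]; exact continuous_norm
      exact IsClosed.preimage hcont isClosed_singleton
  have hScompact : IsCompact S :=
    IsCompact.of_isClosed_subset (isCompact_univ_pi fun _ => hcompact) hSclosed hSsub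
  set ℓ₀ : Fin (m+1) → K := fun i => if i = Fin.last m then 1 else 0 with hℓ₀
  have hℓ₀S : ℓ₀ ∈ S := by
    constructor
    · intro i
      by_cases h : i = Fin.last m <;> simp [hℓ₀, h, Finf.one_mem, Finf.zero_mem]
    · refine le_antisymm (supNorm_le fun i => ?_) ?_
      · by_cases h : i = Fin.last m <;> simp [hℓ₀, h]
      · have h1 := le_supNorm ℓ₀ (Fin.last m)
        simpa [hℓ₀] using h1
  have hcontf : Continuous (fun ℓ : Fin (m+1) → K => ‖∑ i, ℓ i * ω i‖) :=
    (continuous_finset_sum Finset.univ fun i _ => (continuous_apply i).mul continuous_const).norm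
  obtain ⟨ℓmin, hℓminS, hmin⟩ := hScompact.exists_isMinOn ⟨ℓ₀, hℓ₀S⟩ hcontf.continuousOn
  have hcpos : 0 < ‖∑ i, ℓmin i * ω i‖ := by
    rw [norm_pos_iff]
    intro h0
    have hall := hind ℓmin hℓminS.1 h0
    have : supNorm ℓmin = 0 := by
      refine le_antisymm (supNorm_le fun i => by simp [hall i]) (supNorm_nonneg _)
    rw [hℓminS.2] at this
    norm_num at this
  refine lt_of_lt_of_le hcpos (le_csInf ⟨‖∑ i, ℓ₀ i * ω i‖, ℓ₀, hℓ₀S, rfl⟩ ?_)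
  rintro x ⟨ℓ, hℓ, rfl⟩
  exact isMinOn_iff.mp hmin ℓ hℓ

end Aux2

/-- For every `γ ∈ GL_r(F_∞)` there exists `c₂ > 0` such that for every
`ω ∈ Ω^r`:  `|γ(ω)| ≤ c₂·h(ω)⁻¹`. -/
theorem statement6
    (p k q : ℕ) (hp : p.Prime) (hqpk : q = p ^ k) (hk : 0 < k)
    {K : Type*} [NormedField K] [CompleteSpace K] [IsAlgClosed K] [IsUltrametricDist K]
    [CharP K p]
    (t : K) (ht : ‖t‖ = (q : ℝ))
    (Fq : Subfield K) (hFq : (Fq : Set K) = {x : K | x ^ q = x})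
    (F : Subfield K) (hF : F = Subfield.closure ((Fq : Set K) ∪ {t}))
    (A : Subring K) (hA : A = Subring.closure ((Fq : Set K) ∪ {t}))
    (Finf : Subfield K) (hFinf : (Finf : Set K) = closure (F : Set K))
    (ξ : K) (hξ : ξ ≠ 0)
    (m : ℕ) (γ : Matrix (Fin (m + 1)) (Fin (m + 1)) K)
    (hγF : ∀ i j, γ i j ∈ Finf) (hγdet : γ.det ≠ 0) :
    ∃ c₂ : ℝ, 0 < c₂ ∧ ∀ ω ∈ Omega Finf ξ m,
      supNorm (gact ξ γ ω) ≤ c₂ * (hOm Finf ω)⁻¹ := by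
  classical
  have hq2 : 2 ≤ q := by
    calc 2 ≤ p := hp.two_le
      _ ≤ p ^ k := Nat.le_self_pow hk.ne' p
      _ = q := hqpk.symm
  have hq1 : (1 : ℝ) < (q : ℝ) := by exact_mod_cast (by omega : 1 < q)
  have hFq' : ∀ x : Fq, (x : K) ^ q = (x : K) := by
    intro x
    have hx := x.2
    rw [← SetLike.mem_coe, hFq] at hx
    exact hx
  have hcompact : IsCompact {x : K | x ∈ Finf ∧ ‖x‖ ≤ 1} := ball_compact hq2 ht hFq hF hFinf
  have hclosed : IsClosed (Finf : Set K) := by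
    rw [show (Finf : Set K) = closure (F : Set K) from hFinf]
    exact isClosed_closure
  have hrow : ∃ j, γ (Fin.last m) j ≠ 0 := by
    by_contra hall
    push_neg at hall
    exact hγdet (Matrix.det_eq_zero_of_row_eq_zero (Fin.last m) hall)
  obtain ⟨j₀, hj₀⟩ := hrow
  obtain ⟨i₀, hi₀⟩ := exists_supNorm_eq (γ (Fin.last m))
  have hc0 : γ (Fin.last m) i₀ ≠ 0 := by
    intro h
    have h1 := le_supNorm (γ (Fin.last m)) j₀
    rw [hi₀, h, norm_zero] at h1
    exact hj₀ (norm_le_zero_iff.mp h1)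
  set c := γ (Fin.last m) i₀ with hcdef
  have hcpos : 0 < ‖c‖ := norm_pos_iff.mpr hc0
  set C : ℝ := ∑ i, ∑ j, ‖γ i j‖ with hCdef
  have hCij : ∀ i j, ‖γ i j‖ ≤ C := by
    intro i j
    calc ‖γ i j‖ ≤ ∑ j', ‖γ i j'‖ :=
          Finset.single_le_sum (fun j' _ => norm_nonneg _) (Finset.mem_univ j)
      _ ≤ C := Finset.single_le_sum (f := fun i => ∑ j', ‖γ i j'‖)
          (fun i _ => Finset.sum_nonneg fun _ _ => norm_nonneg _) (Finset.mem_univ i)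
  have hCpos : 0 < C := lt_of_lt_of_le hcpos (hCij _ _)
  have hξpos : 0 < ‖ξ‖ := norm_pos_iff.mpr hξ
  refine ⟨‖ξ‖ * ‖c‖⁻¹ * C, by positivity, ?_⟩
  rintro ω ⟨hind, hlast⟩
  have hsnpos : 0 < supNorm ω :=
    lt_of_lt_of_le hξpos (by rw [← hlast]; exact le_supNorm ω (Fin.last m))
  set V := {x : ℝ | ∃ ℓ : Fin (m+1) → K, Unimodular Finf ℓ ∧ x = ‖∑ i, ℓ i * ω i‖} with hV
  have hVpos : 0 < sInf V := sInf_pos' hcompact hclosed hind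
  have hVbdd : BddBelow V := ⟨0, by rintro x ⟨ℓ, hℓ, rfl⟩; exact norm_nonneg _⟩
  have hhom : hOm Finf ω = (supNorm ω)⁻¹ * sInf V := rfl
  have hhpos : 0 < hOm Finf ω := by rw [hhom]; positivity
  set z := (γ.mulVec ω) (Fin.last m) with hzdef
  have hzsum : z = ∑ j, γ (Fin.last m) j * ω j := rfl
  have hunim : Unimodular Finf (fun j => c⁻¹ * γ (Fin.last m) j) := by
    constructor
    · intro j
      exact Finf.mul_mem (Finf.inv_mem (hγF _ _)) (hγF _ _)
    · rw [supNorm_smul, norm_inv, hi₀]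
      exact inv_mul_cancel₀ (ne_of_gt hcpos)
  have hmemV : ‖∑ j, (c⁻¹ * γ (Fin.last m) j) * ω j‖ ∈ V := ⟨_, hunim, rfl⟩
  have hsum2 : ∑ j, (c⁻¹ * γ (Fin.last m) j) * ω j = c⁻¹ * z := by
    rw [hzsum, Finset.mul_sum]
    exact Finset.sum_congr rfl fun j _ => by ring
  have hinfle : sInf V ≤ ‖c‖⁻¹ * ‖z‖ := by
    have h2 := csInf_le hVbdd hmemV
    rwa [hsum2, norm_mul, norm_inv] at h2
  have hzge : ‖c‖ * sInf V ≤ ‖z‖ := by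
    have h2 := mul_le_mul_of_nonneg_left hinfle hcpos.le
    rwa [← mul_assoc, mul_inv_cancel₀ hcpos.ne', one_mul] at h2
  have hjrfl : jmap ξ γ ω = ξ⁻¹ * z := rfl
  have hjnorm : ‖jmap ξ γ ω‖ = ‖ξ‖⁻¹ * ‖z‖ := by rw [hjrfl, norm_mul, norm_inv]
  have hjge : ‖ξ‖⁻¹ * (‖c‖ * (supNorm ω * hOm Finf ω)) ≤ ‖jmap ξ γ ω‖ := by
    rw [hjnorm]
    refine mul_le_mul_of_nonneg_left ?_ (by positivity)
    have hsh : supNorm ω * hOm Finf ω = sInf V := by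
      rw [hhom, ← mul_assoc, mul_inv_cancel₀ hsnpos.ne', one_mul]
    rw [hsh]
    exact hzge
  have hmv : supNorm (γ.mulVec ω) ≤ C * supNorm ω := by
    refine supNorm_le fun i => ?_
    have h3 : (γ.mulVec ω) i = ∑ j, γ i j * ω j := rfl
    rw [h3]
    refine IsUltrametricDist.norm_sum_le_of_forall_le_of_nonneg (by positivity) fun j _ => ?_
    rw [norm_mul]
    exact mul_le_mul (hCij i j) (le_supNorm ω j) (norm_nonneg _) hCpos.le
  have hgact : supNorm (gact ξ γ ω) = ‖jmap ξ γ ω‖⁻¹ * supNorm (γ.mulVec ω) := by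
    rw [show gact ξ γ ω = fun i => (jmap ξ γ ω)⁻¹ * (γ.mulVec ω) i from rfl, supNorm_smul,
      norm_inv]
  rw [hgact]
  calc ‖jmap ξ γ ω‖⁻¹ * supNorm (γ.mulVec ω)
      ≤ (‖ξ‖⁻¹ * (‖c‖ * (supNorm ω * hOm Finf ω)))⁻¹ * (C * supNorm ω) := by
        refine mul_le_mul (inv_anti₀ (by positivity) hjge) hmv (supNorm_nonneg _)
          (by positivity)
    _ = ‖ξ‖ * ‖c‖⁻¹ * C * (hOm Finf ω)⁻¹ := by
        field_simp


end Paper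
end
end

section
/- For every ω' ∈ Ω^{r−1} and every ω₁ ∈ C_∞ one has |e_{Λ'ω'}(ω₁)| ≥ d(ω₁, F_∞^{r−1}ω'). -/
noncomputable section

namespace Paper

/-- A subgroup `H` of `(K,+)` is strongly discrete if its intersection with every ball of
finite radius is finite. -/
def StronglyDiscrete {K : Type*} [NormedField K] (H : AddSubgroup K) : Prop :=
  ∀ ρ : ℝ, 0 < ρ → {z : K | z ∈ H ∧ ‖z‖ ≤ ρ}.Finite

/-- The exponential function `e_H(z) = z·∏_{h ∈ H∖{0}} (1 − z/h)` associated to a strongly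
discrete subgroup `H ⊂ K`. -/
noncomputable def eH {K : Type*} [NormedField K] (H : AddSubgroup K) (z : K) : K :=
  z * ∏' h : {x : K // x ∈ H ∧ x ≠ 0}, (1 - z / h.1)

/-- The additive homomorphism `λ' ↦ λ'ω' = ∑ i, λ'_i ω'_i` (matrix product of a row vector
with a column vector).  `Λ'ω'` is its image `Λ'.map (pairHom ω')`. -/
def pairHom {K : Type*} [NormedField K] {m : ℕ} (ω' : Fin m → K) : (Fin m → K) →+ K where
  toFun lam := ∑ i, lam i * ω' i
  map_zero' := by simp
  map_add' x y := by simp [add_mul, Finset.sum_add_distrib]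

/-- `F_∞^{m}ω' = {xω' : x ∈ F_∞^m} ⊂ K`. -/
def Fspan {K : Type*} [NormedField K] (Finf : Subfield K) {m : ℕ} (ω' : Fin m → K) : Set K :=
  {z | ∃ c : Fin m → K, (∀ i, c i ∈ Finf) ∧ z = ∑ i, c i * ω' i}

/-- `A^m ⊂ K^m`, the additive group of vectors with entries in `A`. -/
def Avec {K : Type*} [NormedField K] (A : Subring K) (m : ℕ) : AddSubgroup (Fin m → K) where
  carrier := {v | ∀ i, v i ∈ A}
  zero_mem' := by intro i; exact A.zero_mem
  add_mem' := by intro a b ha hb i; exact A.add_mem (ha i) (hb i)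
  neg_mem' := by intro a ha i; exact A.neg_mem (ha i)


open Filter Topology in
private lemma eH_lower_bound {K : Type*} [NormedField K] [IsUltrametricDist K]
    (H : AddSubgroup K) (S : Set K) (h0S : (0 : K) ∈ S) (hHS : ∀ x ∈ H, x ∈ S) (z : K) :
    Metric.infDist z S ≤ ‖eH H z‖ := by
  classical
  by_cases hzS : z ∈ S
  · have h1 : Metric.infDist z S ≤ 0 := by
      have h2 := Metric.infDist_le_dist_of_mem (x := z) hzS
      simpa using h2
    exact h1.trans (norm_nonneg _)
  have hdle : ∀ w ∈ S, Metric.infDist z S ≤ ‖z - w‖ := fun w hw => by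
    simpa [dist_eq_norm] using Metric.infDist_le_dist_of_mem hw
  have hz0 : z ≠ 0 := fun h => hzS (by rw [h]; exact h0S)
  have hznorm : (0 : ℝ) < ‖z‖ := norm_pos_iff.2 hz0
  have hdz : Metric.infDist z S ≤ ‖z‖ := by simpa using hdle 0 h0S
  set d := Metric.infDist z S with hd
  set f : {x : K // x ∈ H ∧ x ≠ 0} → K := fun i => 1 - z / i.1 with hfdef
  have hi0 : ∀ i : {x : K // x ∈ H ∧ x ≠ 0}, i.1 ≠ 0 := fun i => i.2.2
  have hiS : ∀ i : {x : K // x ∈ H ∧ x ≠ 0}, i.1 ∈ S := fun i => hHS i.1 i.2.1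
  have hnf : ∀ i : {x : K // x ∈ H ∧ x ≠ 0}, ‖f i‖ = ‖z - i.1‖ / ‖i.1‖ := by
    intro i
    have h1 : f i = (i.1 - z) / i.1 := by
      rw [hfdef]; simp only; rw [sub_div, div_self (hi0 i)]
    rw [h1, norm_div, norm_sub_rev]
  have hdi : ∀ i : {x : K // x ∈ H ∧ x ≠ 0}, d ≤ ‖z - i.1‖ := fun i => hdle i.1 (hiS i)
  -- key finite bound
  have keyfin : ∀ s₀ : Finset {x : K // x ∈ H ∧ x ≠ 0},
      ∃ s : Finset {x : K // x ∈ H ∧ x ≠ 0}, s₀ ⊆ s ∧ d ≤ ‖z‖ * ∏ i ∈ s, ‖f i‖ := by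
    intro s₀
    set B := s₀.filter (fun i => ‖f i‖ < 1) with hB
    rcases B.eq_empty_or_nonempty with hBe | hBne
    · refine ⟨s₀, Finset.Subset.refl _, ?_⟩
      have h1 : (1 : ℝ) ≤ ∏ i ∈ s₀, ‖f i‖ := by
        have := Finset.prod_le_prod (s := s₀) (f := fun _ => (1:ℝ)) (g := fun i => ‖f i‖)
          (fun i _ => zero_le_one)
          (fun i hi => not_lt.1 ((Finset.filter_eq_empty_iff.1 hBe) hi))
        simpa using this
      calc d ≤ ‖z‖ := hdz
        _ = ‖z‖ * 1 := by ring
        _ ≤ ‖z‖ * ∏ i ∈ s₀, ‖f i‖ := by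
            exact mul_le_mul_of_nonneg_left h1 (norm_nonneg z)
    · obtain ⟨i₀, hi₀B, hmin⟩ := B.exists_min_image (fun i => ‖z - i.1‖) hBne
      have hBprop : ∀ i ∈ B, ‖z - i.1‖ < ‖z‖ ∧ ‖i.1‖ = ‖z‖ := by
        intro i hi
        have h1 : ‖f i‖ < 1 := (Finset.mem_filter.1 hi).2
        have hip : (0 : ℝ) < ‖i.1‖ := norm_pos_iff.2 (hi0 i)
        have h2 : ‖z - i.1‖ < ‖i.1‖ := by
          rw [hnf i] at h1; exact (div_lt_one hip).1 h1
        have h3 : ‖i.1‖ = ‖z‖ := by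
          have hne : ‖z - i.1‖ ≠ ‖i.1‖ := ne_of_lt h2
          have h4 := IsUltrametricDist.norm_add_eq_max_of_norm_ne_norm hne
          rw [sub_add_cancel] at h4
          rw [h4, max_eq_right h2.le]
        exact ⟨h3 ▸ h2, h3⟩
      set g : {x : K // x ∈ H ∧ x ≠ 0} → {x : K // x ∈ H ∧ x ≠ 0} := fun i =>
        if h : i.1 - i₀.1 ∈ H ∧ i.1 - i₀.1 ≠ 0 then ⟨i.1 - i₀.1, h⟩ else i₀ with hg
      have hgval : ∀ i ∈ B.erase i₀, (g i).1 = i.1 - i₀.1 := by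
        intro i hi
        have hne : i ≠ i₀ := (Finset.mem_erase.1 hi).1
        have hmem : i.1 - i₀.1 ∈ H := H.sub_mem i.2.1 i₀.2.1
        have hnz : i.1 - i₀.1 ≠ 0 := sub_ne_zero.2 (fun h => hne (Subtype.ext h))
        rw [hg]; simp only [dif_pos (And.intro hmem hnz)]
      have hglt : ∀ i ∈ B.erase i₀, ‖(g i).1‖ ≤ ‖z - i.1‖ ∧ ‖(g i).1‖ < ‖z‖ := by
        intro i hi
        have hiB : i ∈ B := Finset.mem_of_mem_erase hi
        have h1 : ‖(g i).1‖ ≤ ‖z - i.1‖ := by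
          rw [hgval i hi]
          have h2 : i.1 - i₀.1 = (i.1 - z) + (z - i₀.1) := by ring
          rw [h2]
          refine le_trans (IsUltrametricDist.norm_add_le_max _ _) (max_le ?_ ?_)
          · rw [norm_sub_rev]
          · exact hmin i hiB
        exact ⟨h1, lt_of_le_of_lt h1 (hBprop i hiB).1⟩
      have hgz : ∀ i ∈ B.erase i₀, ‖z - (g i).1‖ = ‖z‖ := by
        intro i hi
        have hlt : ‖(g i).1‖ < ‖z‖ := (hglt i hi).2
        have hne : ‖z‖ ≠ ‖-(g i).1‖ := by rw [norm_neg]; exact (ne_of_gt hlt)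
        have h4 := IsUltrametricDist.norm_add_eq_max_of_norm_ne_norm hne
        rw [← sub_eq_add_neg] at h4
        rw [h4, norm_neg, max_eq_left hlt.le]
      have hgone : ∀ i ∈ B.erase i₀, 1 < ‖f (g i)‖ := by
        intro i hi
        rw [hnf (g i), hgz i hi]
        have hp : (0 : ℝ) < ‖(g i).1‖ := norm_pos_iff.2 (hi0 (g i))
        exact (one_lt_div hp).2 (hglt i hi).2
      have hpair : ∀ i ∈ B.erase i₀, (1 : ℝ) ≤ ‖f i‖ * ‖f (g i)‖ := by
        intro i hi
        have hiB : i ∈ B := Finset.mem_of_mem_erase hi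
        have hp : (0 : ℝ) < ‖(g i).1‖ := norm_pos_iff.2 (hi0 (g i))
        rw [hnf i, hnf (g i), (hBprop i hiB).2, hgz i hi]
        have hle : ‖(g i).1‖ ≤ ‖z - i.1‖ := (hglt i hi).1
        calc (1 : ℝ) ≤ ‖z - i.1‖ / ‖(g i).1‖ := (one_le_div hp).2 hle
          _ = ‖z - i.1‖ / ‖z‖ * (‖z‖ / ‖(g i).1‖) := by
              rw [div_mul_div_comm, mul_comm ‖z - i.1‖ ‖z‖,
                mul_div_mul_left _ _ (ne_of_gt hznorm)]
      set C := (B.erase i₀).image g with hC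
      refine ⟨s₀ ∪ C, Finset.subset_union_left, ?_⟩
      have hinj : ∀ i ∈ B.erase i₀, ∀ j ∈ B.erase i₀, g i = g j → i = j := by
        intro i hi j hj hij
        apply Subtype.ext
        have h1 := congrArg Subtype.val hij
        rw [hgval i hi, hgval j hj] at h1
        exact sub_left_inj.1 h1
      have hBsub : B ⊆ s₀ ∪ C := (Finset.filter_subset _ _).trans Finset.subset_union_left
      have hCsub : C ⊆ (s₀ ∪ C) \ B := by
        intro x hx
        obtain ⟨i, hi, rfl⟩ := Finset.mem_image.1 hx
        refine Finset.mem_sdiff.2 ⟨Finset.mem_union_right _ hx, ?_⟩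
        intro hmemB
        exact absurd (Finset.mem_filter.1 hmemB).2 (not_lt.2 (hgone i hi).le)
      have e1 : ∏ i ∈ s₀ ∪ C, ‖f i‖ =
          ((∏ i ∈ ((s₀ ∪ C) \ B) \ C, ‖f i‖) * ∏ i ∈ C, ‖f i‖) * ∏ i ∈ B, ‖f i‖ := by
        rw [Finset.prod_sdiff hCsub, Finset.prod_sdiff hBsub]
      have e2 : ∏ i ∈ C, ‖f i‖ = ∏ i ∈ B.erase i₀, ‖f (g i)‖ := Finset.prod_image hinj
      have e3 : ∏ i ∈ B, ‖f i‖ = ‖f i₀‖ * ∏ i ∈ B.erase i₀, ‖f i‖ :=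
        (Finset.mul_prod_erase _ _ hi₀B).symm
      have e4 : (1 : ℝ) ≤ ∏ i ∈ ((s₀ ∪ C) \ B) \ C, ‖f i‖ := by
        have := Finset.prod_le_prod (s := ((s₀ ∪ C) \ B) \ C) (f := fun _ => (1:ℝ))
          (g := fun i => ‖f i‖) (fun i _ => zero_le_one) ?_
        · simpa using this
        · intro i hi
          have h1 := Finset.mem_sdiff.1 (Finset.mem_sdiff.1 hi).1
          exact not_lt.1 fun hlt => h1.2 (Finset.mem_filter.2
            ⟨(Finset.mem_union.1 h1.1).resolve_right
              fun hc => (Finset.mem_sdiff.1 hi).2 hc, hlt⟩)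
      have e5 : (1 : ℝ) ≤ ∏ i ∈ B.erase i₀, (‖f i‖ * ‖f (g i)‖) := by
        have := Finset.prod_le_prod (s := B.erase i₀) (f := fun _ => (1:ℝ))
          (g := fun i => ‖f i‖ * ‖f (g i)‖) (fun i _ => zero_le_one) hpair
        simpa using this
      have hri : d / ‖z‖ ≤ ‖f i₀‖ := by
        rw [hnf i₀, (hBprop i₀ hi₀B).2]
        exact (div_le_div_iff_of_pos_right hznorm).2 (hdi i₀)
      have e6 : ((∏ i ∈ ((s₀ ∪ C) \ B) \ C, ‖f i‖) * ∏ i ∈ B.erase i₀, ‖f (g i)‖) *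
          (‖f i₀‖ * ∏ i ∈ B.erase i₀, ‖f i‖) =
          ‖f i₀‖ * ((∏ i ∈ ((s₀ ∪ C) \ B) \ C, ‖f i‖) *
            ∏ i ∈ B.erase i₀, (‖f i‖ * ‖f (g i)‖)) := by
        rw [Finset.prod_mul_distrib]; ring
      have h7 : d / ‖z‖ ≤ ∏ i ∈ s₀ ∪ C, ‖f i‖ := by
        rw [e1, e2, e3, e6]
        refine le_trans hri ?_
        refine le_mul_of_one_le_right (norm_nonneg _) ?_
        calc (1:ℝ) = 1 * 1 := by ring
          _ ≤ _ := mul_le_mul e4 e5 zero_le_one (zero_le_one.trans e4)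
      calc d = ‖z‖ * (d / ‖z‖) := by field_simp
        _ ≤ ‖z‖ * ∏ i ∈ s₀ ∪ C, ‖f i‖ := mul_le_mul_of_nonneg_left h7 (norm_nonneg z)
  -- main argument
  have he : eH H z = z * ∏' i, f i := rfl
  rw [he, norm_mul]
  by_cases hmul : Multipliable f
  · obtain ⟨P, hP⟩ := hmul
    rw [hP.tprod_eq]
    by_contra hcon
    push_neg at hcon
    have hten : Tendsto (fun s : Finset {x : K // x ∈ H ∧ x ≠ 0} =>
        ‖z‖ * ‖∏ i ∈ s, f i‖) atTop (𝓝 (‖z‖ * ‖P‖)) :=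
      Filter.Tendsto.const_mul ‖z‖ (Filter.Tendsto.norm hP)
    have hev := hten.eventually_lt_const hcon
    obtain ⟨s₀, hs₀⟩ := Filter.eventually_atTop.1 hev
    obtain ⟨s, hsub, hbound⟩ := keyfin s₀
    have hlt := hs₀ s hsub
    rw [norm_prod] at hlt
    exact absurd hbound (not_le.2 hlt)
  · rw [tprod_eq_one_of_not_multipliable hmul]
    simpa using hdz

/-- (Proposition 4.3(d).)  For every `ω' ∈ Ω^{r−1}` and every `ω₁ ∈ C_∞`
one has `|e_{Λ'ω'}(ω₁)| ≥ d(ω₁, F_∞^{r−1}ω')`. -/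
theorem statement10
    (p k q : ℕ) (hp : p.Prime) (hqpk : q = p ^ k) (hk : 0 < k)
    {K : Type*} [NormedField K] [CompleteSpace K] [IsAlgClosed K] [IsUltrametricDist K]
    [CharP K p]
    (t : K) (ht : ‖t‖ = (q : ℝ))
    (Fq : Subfield K) (hFq : (Fq : Set K) = {x : K | x ^ q = x})
    (F : Subfield K) (hF : F = Subfield.closure ((Fq : Set K) ∪ {t}))
    (A : Subring K) (hA : A = Subring.closure ((Fq : Set K) ∪ {t}))
    (Finf : Subfield K) (hFinf : (Finf : Set K) = closure (F : Set K))
    (ξ : K) (hξ : ξ ≠ 0)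
    (s : ℕ) (Λ' : AddSubgroup (Fin (s + 1) → K))
    (hΛ'F : ∀ lam ∈ Λ', ∀ i, lam i ∈ F)
    (hco1 : (Λ' ⊓ Avec A (s + 1)).relIndex Λ' ≠ 0)
    (hco2 : (Λ' ⊓ Avec A (s + 1)).relIndex (Avec A (s + 1)) ≠ 0)
    : ∀ ω' ∈ Omega Finf ξ s, ∀ ω₁ : K,
      Metric.infDist ω₁ (Fspan Finf ω') ≤ ‖eH (Λ'.map (pairHom ω')) ω₁‖ := by
  intro ω' hω' ω₁
  have hFsub : ∀ x : K, x ∈ F → x ∈ Finf := by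
    intro x hx
    have : x ∈ (Finf : Set K) := by
      rw [hFinf]; exact subset_closure hx
    exact this
  refine eH_lower_bound _ (Fspan Finf ω') ?_ ?_ ω₁
  · exact ⟨0, fun i => Finf.zero_mem, by simp⟩
  intro x hx
  obtain ⟨lam, hlam, rfl⟩ := AddSubgroup.mem_map.1 hx
  exact ⟨lam, fun i => hFsub _ (hΛ'F lam hlam i), rfl⟩


end Paper
end
end
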